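/- The identity matrix I_n is an order unit for the cone Σ²Mat_n(ℝG) of sums of hermitian squares: for every *-invariant matrix M ∈ Mat_n(ℝG), the matrix M + ‖M‖₁ I_n is a sum of hermitian squares in Mat_n(ℝG). -/

import Mathlib

/-- The group-ring involution on `ℝG` determined by `g ↦ g⁻¹`. -/
noncomputable def gstar {G : Type*} [Group G] (x : MonoidAlgebra ℝ G) : MonoidAlgebra ℝ G :=
  MonoidAlgebra.ofCoeff (Finsupp.equivMapDomain (Equiv.inv G) x.coeff)

section GroupRingStar
variable {G : Type*} [Group G]

lemma gstar_single (g : G) (a : ℝ) :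
    gstar (MonoidAlgebra.single g a) = MonoidAlgebra.single g⁻¹ a := by
  simp [gstar, ← MonoidAlgebra.ofCoeff_single, Finsupp.equivMapDomain_single]

lemma gstar_add (x y : MonoidAlgebra ℝ G) : gstar (x + y) = gstar x + gstar y :=
  congrArg MonoidAlgebra.ofCoeff (map_add (Finsupp.domCongr (M := ℝ) (Equiv.inv G)) x.coeff y.coeff)

lemma gstar_zero : gstar (0 : MonoidAlgebra ℝ G) = 0 := by ext g; simp [gstar]

lemma gstar_gstar (x : MonoidAlgebra ℝ G) : gstar (gstar x) = x := by
  ext g; simp [gstar]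

lemma gstar_mul (x y : MonoidAlgebra ℝ G) : gstar (x * y) = gstar y * gstar x := by
  induction x using MonoidAlgebra.induction_linear with
  | zero => simp [gstar_zero]
  | add f g hf hg => rw [add_mul, gstar_add, hf, hg, gstar_add, mul_add]
  | single g a =>
    induction y using MonoidAlgebra.induction_linear with
    | zero => simp [gstar_zero]
    | add f g' hf hg => rw [mul_add, gstar_add, hf, hg, gstar_add, add_mul]
    | single h b =>
      rw [MonoidAlgebra.single_mul_single, gstar_single, gstar_single, gstar_single,
        MonoidAlgebra.single_mul_single, mul_inv_rev, mul_comm]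

/-- `ℝG` as a `*`-ring, with `star` induced by `g ↦ g⁻¹`. -/
noncomputable instance groupRingStar : StarRing (MonoidAlgebra ℝ G) where
  star := gstar
  star_involutive := gstar_gstar
  star_add := gstar_add
  star_mul := gstar_mul

lemma star_of (g : G) : star (MonoidAlgebra.of ℝ G g) = MonoidAlgebra.of ℝ G g⁻¹ := by
  show gstar _ = _
  simp [MonoidAlgebra.of_apply, gstar_single]

end GroupRingStar

/-- The `ℓ¹`-norm of an element of the group ring `ℝG`. -/
noncomputable def l1Norm {G : Type*} [Group G] (x : MonoidAlgebra ℝ G) : ℝ :=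
  ∑ g ∈ x.coeff.support, |x.coeff g|

/-- The `ℓ¹`-norm of a matrix over the group ring: the sum of the norms of entries. -/
noncomputable def matL1Norm {G : Type*} [Group G] {n : ℕ}
    (M : Matrix (Fin n) (Fin n) (MonoidAlgebra ℝ G)) : ℝ :=
  ∑ i, ∑ j, l1Norm (M i j)

/-- A matrix over `ℝG` is a sum of hermitian squares, i.e. lies in `Σ²Matₙ(ℝG)`. -/
def IsMatSOS {G : Type*} [Group G] {n : ℕ}
    (M : Matrix (Fin n) (Fin n) (MonoidAlgebra ℝ G)) : Prop :=
  ∃ (k : ℕ) (A : Fin k → Matrix (Fin n) (Fin n) (MonoidAlgebra ℝ G)),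
    M = ∑ i, star (A i) * A i



section Aux
open Matrix

variable {G : Type*} [Group G] {n : ℕ}

local notation "R" => MonoidAlgebra ℝ G
local notation "Mat" => Matrix (Fin n) (Fin n) (MonoidAlgebra ℝ G)

lemma my_star_single (g : G) (c : ℝ) :
    star (MonoidAlgebra.single g c) = MonoidAlgebra.single g⁻¹ c := gstar_single g c

lemma my_gstar_smul (t : ℝ) (x : R) : gstar (t • x) = t • gstar x := by
  ext g
  simp [gstar]

lemma my_gstar_sum {ι : Type*} (s : Finset ι) (f : ι → R) :
    gstar (∑ i ∈ s, f i) = ∑ i ∈ s, gstar (f i) :=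
  star_sum s f

lemma my_star_stdBasisMatrix (i j : Fin n) (x : R) :
    star (Matrix.single i j x) = Matrix.single j i (star x) := by
  refine Matrix.ext fun a b => ?_
  rw [Matrix.star_apply]
  by_cases h1 : i = b <;> by_cases h2 : j = a <;>
    simp [Matrix.single_apply, h1, h2]

lemma my_stdBasisMatrix_sum {ι : Type*} (i j : Fin n) (s : Finset ι) (f : ι → R) :
    Matrix.single i j (∑ k ∈ s, f k) = ∑ k ∈ s, Matrix.single i j (f k) :=
  map_sum (AddMonoidHom.mk' (fun x : R => Matrix.single i j x)
    (Matrix.single_add i j)) f s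

lemma my_single_sum {ι : Type*} (g : G) (s : Finset ι) (f : ι → ℝ) :
    MonoidAlgebra.single g (∑ k ∈ s, f k) = ∑ k ∈ s, MonoidAlgebra.single g (f k) :=
  map_sum (MonoidAlgebra.singleAddHom g) f s

lemma my_sos_zero : IsMatSOS (0 : Mat) := ⟨0, fun _ => 0, by simp⟩

lemma my_sos_add {A B : Mat} (hA : IsMatSOS A) (hB : IsMatSOS B) : IsMatSOS (A + B) := by
  obtain ⟨k, f, rfl⟩ := hA
  obtain ⟨l, g, rfl⟩ := hB
  refine ⟨k + l, Fin.append f g, ?_⟩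
  rw [Fin.sum_univ_add]
  simp [Fin.append_left, Fin.append_right]

lemma my_sos_sum {ι : Type*} (s : Finset ι) (f : ι → Mat)
    (h : ∀ i ∈ s, IsMatSOS (f i)) : IsMatSOS (∑ i ∈ s, f i) :=
  Finset.sum_induction f IsMatSOS (fun _ _ ha hb => my_sos_add ha hb) my_sos_zero h

lemma my_l1Norm_nonneg (x : R) : 0 ≤ l1Norm x :=
  Finset.sum_nonneg fun _ _ => abs_nonneg _

lemma my_sos_basic (i j : Fin n) (g : G) (c : ℝ) :
    IsMatSOS (Matrix.single i j (MonoidAlgebra.single g c)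
      + Matrix.single j i (MonoidAlgebra.single g⁻¹ c)
      + Matrix.single i i (MonoidAlgebra.single (1 : G) |c|)
      + Matrix.single j j (MonoidAlgebra.single (1 : G) |c|)) := by
  set a := Real.sqrt |c| with ha
  set b := if 0 ≤ c then a else -a with hb
  have haa : a * a = |c| := Real.mul_self_sqrt (abs_nonneg c)
  have hab : a * b = c := by
    by_cases h : 0 ≤ c
    · rw [hb, if_pos h, haa, abs_of_nonneg h]
    · rw [hb, if_neg h, mul_neg, haa, abs_of_neg (lt_of_not_ge h), neg_neg]
  have hba : b * a = c := by rw [mul_comm]; exact hab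
  have hbb : b * b = |c| := by
    by_cases h : 0 ≤ c
    · rw [hb, if_pos h, haa]
    · rw [hb, if_neg h, neg_mul_neg, haa]
  refine ⟨1, fun _ => Matrix.single i i (MonoidAlgebra.single (1 : G) a)
    + Matrix.single i j (MonoidAlgebra.single g b), ?_⟩
  rw [Fin.sum_univ_one, star_add, my_star_stdBasisMatrix, my_star_stdBasisMatrix,
    my_star_single, my_star_single, inv_one]
  rw [add_mul, mul_add, mul_add, Matrix.single_mul_single_same, Matrix.single_mul_single_same,
    Matrix.single_mul_single_same, Matrix.single_mul_single_same,
    MonoidAlgebra.single_mul_single, MonoidAlgebra.single_mul_single,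
    MonoidAlgebra.single_mul_single, MonoidAlgebra.single_mul_single]
  rw [one_mul, one_mul, mul_one, inv_mul_cancel, haa, hab, hba, hbb]
  abel

lemma my_sos_diag (k : Fin n) (r : ℝ) (hr : 0 ≤ r) :
    IsMatSOS (Matrix.single k k (MonoidAlgebra.single (1 : G) r)) := by
  refine ⟨1, fun _ => Matrix.single k k (MonoidAlgebra.single (1 : G) (Real.sqrt r)), ?_⟩
  rw [Fin.sum_univ_one, my_star_stdBasisMatrix, my_star_single, inv_one,
    Matrix.single_mul_single_same, MonoidAlgebra.single_mul_single, one_mul,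
    Real.mul_self_sqrt hr]

lemma my_sum_single_half (x : R) :
    ∑ g ∈ x.coeff.support, MonoidAlgebra.single g (x.coeff g / 2) = (2 : ℝ)⁻¹ • x := by
  have h : ∀ g ∈ x.coeff.support, MonoidAlgebra.single g (x.coeff g / 2)
      = (2 : ℝ)⁻¹ • MonoidAlgebra.single g (x.coeff g) := by
    intro g _
    rw [MonoidAlgebra.smul_single']
    congr 1
    ring
  rw [Finset.sum_congr rfl h, ← Finset.smul_sum]
  congr 1
  exact MonoidAlgebra.sum_coeff_single x

lemma my_sum_single_inv_half (x : R) :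
    ∑ g ∈ x.coeff.support, MonoidAlgebra.single g⁻¹ (x.coeff g / 2) = (2 : ℝ)⁻¹ • gstar x := by
  have h : ∀ g ∈ x.coeff.support, MonoidAlgebra.single g⁻¹ (x.coeff g / 2)
      = gstar (MonoidAlgebra.single g (x.coeff g / 2)) := by
    intro g _; rw [gstar_single]
  rw [Finset.sum_congr rfl h, ← my_gstar_sum, my_sum_single_half, my_gstar_smul]

lemma my_smul_one (s : ℝ) :
    s • (1 : Mat) = ∑ k, Matrix.single k k (MonoidAlgebra.single (1 : G) s) := by
  refine Matrix.ext fun a b => ?_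
  rw [Matrix.sum_apply, Matrix.smul_apply, Matrix.one_apply]
  by_cases h : a = b
  · subst h
    rw [if_pos rfl]
    have e : ∀ k : Fin n, Matrix.single k k (MonoidAlgebra.single (1 : G) s) a a
        = if k = a then MonoidAlgebra.single (1 : G) s else 0 := by
      intro k
      by_cases hk : k = a <;> simp [Matrix.single_apply, hk]
    rw [Finset.sum_congr rfl fun k _ => e k,
      Finset.sum_ite_eq' Finset.univ a fun _ => MonoidAlgebra.single (1 : G) s,
      if_pos (Finset.mem_univ a), MonoidAlgebra.one_def, MonoidAlgebra.smul_single', mul_one]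
  · rw [if_neg h, smul_zero, eq_comm]
    refine Finset.sum_eq_zero fun k _ => ?_
    show (if k = a ∧ k = b then _ else 0) = 0
    rw [if_neg]
    rintro ⟨rfl, rfl⟩
    exact h rfl

end Aux

/-- the identity matrix is an order unit for `Σ²Matₙ(ℝG)`: for every
`*`-invariant `M`, the matrix `M + ‖M‖₁ Iₙ` is a sum of hermitian squares. -/
theorem statement5 {G : Type*} [Group G] {n : ℕ}
    (M : Matrix (Fin n) (Fin n) (MonoidAlgebra ℝ G)) (hM : star M = M) :
    IsMatSOS (M + matL1Norm M • (1 : Matrix (Fin n) (Fin n) (MonoidAlgebra ℝ G))) := by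
  classical
  open Matrix in
  set N := matL1Norm M with hN
  have hsym : ∀ i j, gstar (M i j) = M j i := by
    intro i j
    have h : star M j i = M j i := by rw [hM]
    rw [Matrix.star_apply] at h
    exact h
  set r : Fin n → ℝ := fun k => ∑ j, l1Norm (M k j) with hr
  set cc : Fin n → ℝ := fun k => ∑ i, l1Norm (M i k) with hcc
  have hNr : N = ∑ i, r i := rfl
  have hNc : N = ∑ k, cc k := by
    rw [hNr]
    simp only [hr, hcc]
    exact Finset.sum_comm
  have hrpos : ∀ k, 0 ≤ r k := by
    intro k
    simp only [hr]
    exact Finset.sum_nonneg fun j _ => my_l1Norm_nonneg _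
  have hcpos : ∀ k, 0 ≤ cc k := by
    intro k
    simp only [hcc]
    exact Finset.sum_nonneg fun j _ => my_l1Norm_nonneg _
  have hrN : ∀ k, r k ≤ N := by
    intro k
    rw [hNr]
    exact Finset.single_le_sum (f := r) (fun i _ => hrpos i) (Finset.mem_univ k)
  have hcN : ∀ k, cc k ≤ N := by
    intro k
    rw [hNc]
    exact Finset.single_le_sum (f := cc) (fun i _ => hcpos i) (Finset.mem_univ k)
  have inner : ∀ i j, (∑ g ∈ (M i j).coeff.support,
      (Matrix.single i j (MonoidAlgebra.single g ((M i j).coeff g / 2))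
        + Matrix.single j i (MonoidAlgebra.single g⁻¹ ((M i j).coeff g / 2))
        + Matrix.single i i (MonoidAlgebra.single (1 : G) |(M i j).coeff g / 2|)
        + Matrix.single j j (MonoidAlgebra.single (1 : G) |(M i j).coeff g / 2|)))
      = (2 : ℝ)⁻¹ • Matrix.single i j (M i j) + (2 : ℝ)⁻¹ • Matrix.single j i (M j i)
        + Matrix.single i i (MonoidAlgebra.single (1 : G) (l1Norm (M i j) / 2))
        + Matrix.single j j (MonoidAlgebra.single (1 : G) (l1Norm (M i j) / 2)) := by
    intro i j
    have habs : ∑ g ∈ (M i j).coeff.support, |(M i j).coeff g / 2| = l1Norm (M i j) / 2 := by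
      show _ = (∑ g ∈ (M i j).coeff.support, |(M i j).coeff g|) / 2
      rw [Finset.sum_div]
      exact Finset.sum_congr rfl fun g _ => by rw [abs_div, abs_two]
    rw [Finset.sum_add_distrib, Finset.sum_add_distrib, Finset.sum_add_distrib]
    congr 1
    · congr 1
      · congr 1
        · rw [← my_stdBasisMatrix_sum, my_sum_single_half, ← Matrix.smul_single]
        · rw [← my_stdBasisMatrix_sum, my_sum_single_inv_half, hsym, ← Matrix.smul_single]
      · rw [← my_stdBasisMatrix_sum, ← my_single_sum, habs]
    · rw [← my_stdBasisMatrix_sum, ← my_single_sum, habs]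
  have hS1 : ∑ i, ∑ j, (2 : ℝ)⁻¹ • Matrix.single i j (M i j) = (2 : ℝ)⁻¹ • M := by
    simp only [← Finset.smul_sum]
    rw [← Matrix.matrix_eq_sum_single]
  have hS2 : ∑ i, ∑ j, (2 : ℝ)⁻¹ • Matrix.single j i (M j i) = (2 : ℝ)⁻¹ • M := by
    rw [Finset.sum_comm]
    simp only [← Finset.smul_sum]
    rw [← Matrix.matrix_eq_sum_single]
  have hS3 : ∑ i, ∑ j, Matrix.single i i (MonoidAlgebra.single (1 : G) (l1Norm (M i j) / 2))
      = ∑ k, Matrix.single k k (MonoidAlgebra.single (1 : G) (r k / 2)) := by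
    refine Finset.sum_congr rfl fun i _ => ?_
    rw [← my_stdBasisMatrix_sum, ← my_single_sum, ← Finset.sum_div]
  have hS4 : ∑ i, ∑ j, Matrix.single j j (MonoidAlgebra.single (1 : G) (l1Norm (M i j) / 2))
      = ∑ k, Matrix.single k k (MonoidAlgebra.single (1 : G) (cc k / 2)) := by
    rw [Finset.sum_comm]
    refine Finset.sum_congr rfl fun j _ => ?_
    rw [← my_stdBasisMatrix_sum, ← my_single_sum, ← Finset.sum_div]
  have hdiag : (∑ k, Matrix.single k k (MonoidAlgebra.single (1 : G) (r k / 2)))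
      + (∑ k, Matrix.single k k (MonoidAlgebra.single (1 : G) (cc k / 2)))
      + (∑ k, Matrix.single k k (MonoidAlgebra.single (1 : G) (N - (r k + cc k) / 2)))
      = N • (1 : Matrix (Fin n) (Fin n) (MonoidAlgebra ℝ G)) := by
    rw [my_smul_one, ← Finset.sum_add_distrib, ← Finset.sum_add_distrib]
    refine Finset.sum_congr rfl fun k _ => ?_
    rw [← Matrix.single_add, ← Matrix.single_add, ← MonoidAlgebra.single_add,
      ← MonoidAlgebra.single_add]
    congr 1
    ring
  have hdouble : (2 : ℝ)⁻¹ • M + (2 : ℝ)⁻¹ • M = M := by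
    rw [← add_smul]
    norm_num
  have key : M + N • (1 : Matrix (Fin n) (Fin n) (MonoidAlgebra ℝ G))
      = (∑ i, ∑ j, ∑ g ∈ (M i j).coeff.support,
          (Matrix.single i j (MonoidAlgebra.single g ((M i j).coeff g / 2))
            + Matrix.single j i (MonoidAlgebra.single g⁻¹ ((M i j).coeff g / 2))
            + Matrix.single i i (MonoidAlgebra.single (1 : G) |(M i j).coeff g / 2|)
            + Matrix.single j j (MonoidAlgebra.single (1 : G) |(M i j).coeff g / 2|)))
        + ∑ k, Matrix.single k k (MonoidAlgebra.single (1 : G) (N - (r k + cc k) / 2)) := by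
    rw [Finset.sum_congr rfl fun i (_ : i ∈ Finset.univ) =>
      Finset.sum_congr rfl fun j (_ : j ∈ Finset.univ) => inner i j]
    simp only [Finset.sum_add_distrib]
    rw [hS1, hS2, hS3, hS4, hdouble, ← hdiag]
    abel
  rw [key]
  refine my_sos_add (my_sos_sum _ _ fun i _ => my_sos_sum _ _ fun j _ =>
    my_sos_sum _ _ fun g _ => my_sos_basic i j g ((M i j).coeff g / 2)) (my_sos_sum _ _ fun k _ => ?_)
  refine my_sos_diag k _ ?_
  have h1 := hrN k
  have h2 := hcN k
  linarith
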